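/- If 2ρ² > 1 (and ρ < 1), then the mutual information I_h = −(1/2) ln(1 − (2ρ²)^h / R_h) converges, as h → ∞, to the strictly positive limit −(1/2) ln(1/ρ² − 1) (solvability of Gaussian root reconstruction in the Kesten–Stigum regime). -/

import Mathlib

/-- `R_h = 1 + ρ²((2ρ²)^h − 1)/(2ρ² − 1)` (closed form of the row sum). -/
noncomputable def Rseq (ρ : ℝ) (h : ℕ) : ℝ :=
  1 + ρ ^ 2 * ((2 * ρ ^ 2) ^ h - 1) / (2 * ρ ^ 2 - 1)

/-- Root–leaves mutual information `I_h = −(1/2) ln(1 − (2ρ²)^h / R_h)`. -/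
noncomputable def Iseq (ρ : ℝ) (h : ℕ) : ℝ :=
  -(1 / 2) * Real.log (1 - (2 * ρ ^ 2) ^ h / Rseq ρ h)

/-- In the Kesten–Stigum regime (`2ρ² > 1`, `ρ < 1`), the mutual information between
the root and the leaves converges to the strictly positive limit
`−(1/2) ln(1/ρ² − 1)`. -/
theorem mutualInfo_tendsto_pos (ρ : ℝ) (hρ : ρ ∈ Set.Ioo (0:ℝ) 1)
    (hKS : 1 < 2 * ρ ^ 2) :
    Filter.Tendsto (Iseq ρ) Filter.atTop
      (nhds (-(1 / 2) * Real.log (1 / ρ ^ 2 - 1))) ∧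
    0 < -(1 / 2) * Real.log (1 / ρ ^ 2 - 1) := by
  obtain ⟨hρ0, hρ1⟩ := hρ
  have hρ2 : (0:ℝ) < ρ ^ 2 := by positivity
  have hρ2lt1 : ρ ^ 2 < 1 := by nlinarith
  have hKS' : (0:ℝ) < 2 * ρ ^ 2 - 1 := by linarith
  have h2ρ : (0:ℝ) < 2 * ρ ^ 2 := by linarith
  set r : ℝ := (2 * ρ ^ 2)⁻¹ with hr
  have hr0 : 0 ≤ r := by positivity
  have hr1 : r < 1 := by
    rw [hr, inv_lt_one_iff₀]; right; linarith
  -- key: limit of the inner expression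
  have hL : (0:ℝ) < 1 / ρ ^ 2 - 1 := by
    rw [sub_pos, lt_div_iff₀ hρ2]; linarith
  have hLlt1 : 1 / ρ ^ 2 - 1 < 1 := by
    rw [sub_lt_iff_lt_add, div_lt_iff₀ hρ2]; linarith
  -- rewrite inner expression
  have hrewrite : ∀ h : ℕ, 1 - (2 * ρ ^ 2) ^ h / Rseq ρ h =
      1 - (2 * ρ ^ 2 - 1) / (ρ ^ 2 + (ρ ^ 2 - 1) * r ^ h) := by
    intro h
    have hq : (0:ℝ) < (2 * ρ ^ 2) ^ h := pow_pos h2ρ h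
    have hq1 : (1:ℝ) ≤ (2 * ρ ^ 2) ^ h := one_le_pow₀ hKS.le
    have hden : 0 < ρ ^ 2 + (ρ ^ 2 - 1) * r ^ h := by
      have hrh1 : r ^ h ≤ 1 := pow_le_one₀ hr0 hr1.le
      have hrh0 : 0 ≤ r ^ h := pow_nonneg hr0 h
      nlinarith
    have hrpow : r ^ h = ((2 * ρ ^ 2) ^ h)⁻¹ := by
      rw [hr, inv_pow]
    have hRval : Rseq ρ h = (ρ ^ 2 * (2 * ρ ^ 2) ^ h + ρ ^ 2 - 1) / (2 * ρ ^ 2 - 1) := by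
      rw [Rseq, eq_div_iff hKS'.ne', add_mul, div_mul_cancel₀ _ hKS'.ne']; ring
    have hRpos : 0 < Rseq ρ h := by
      rw [hRval]
      apply div_pos _ hKS'
      nlinarith [hq1, hρ2]
    rw [hRval, hrpow]
    rw [div_div_eq_mul_div]
    congr 1
    rw [div_eq_div_iff (by nlinarith [hq1, hρ2]) (by rw [hrpow] at hden; linarith)]
    field_simp
    ring
  have hinner : Filter.Tendsto (fun h : ℕ => 1 - (2 * ρ ^ 2) ^ h / Rseq ρ h)
      Filter.atTop (nhds (1 / ρ ^ 2 - 1)) := by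
    have hpow : Filter.Tendsto (fun h : ℕ => r ^ h) Filter.atTop (nhds 0) :=
      tendsto_pow_atTop_nhds_zero_of_lt_one hr0 hr1
    have hden : Filter.Tendsto (fun h : ℕ => ρ ^ 2 + (ρ ^ 2 - 1) * r ^ h)
        Filter.atTop (nhds (ρ ^ 2)) := by
      have h1 : Filter.Tendsto (fun h : ℕ => (ρ ^ 2 - 1) * r ^ h) Filter.atTop
          (nhds ((ρ ^ 2 - 1) * 0)) := tendsto_const_nhds.mul hpow
      have h2 := (tendsto_const_nhds (x := ρ ^ 2) (f := Filter.atTop (α := ℕ))).add h1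
      simpa using h2
    have hfrac : Filter.Tendsto (fun h : ℕ =>
        1 - (2 * ρ ^ 2 - 1) / (ρ ^ 2 + (ρ ^ 2 - 1) * r ^ h))
        Filter.atTop (nhds (1 - (2 * ρ ^ 2 - 1) / ρ ^ 2)) :=
      tendsto_const_nhds.sub (tendsto_const_nhds.div hden (ne_of_gt hρ2))
    have heq : 1 - (2 * ρ ^ 2 - 1) / ρ ^ 2 = 1 / ρ ^ 2 - 1 := by
      field_simp; ring
    rw [heq] at hfrac
    exact hfrac.congr (fun h => (hrewrite h).symm)
  constructor
  · have hlog : Filter.Tendsto (fun h : ℕ =>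
        Real.log (1 - (2 * ρ ^ 2) ^ h / Rseq ρ h)) Filter.atTop
        (nhds (Real.log (1 / ρ ^ 2 - 1))) :=
      (Real.continuousAt_log (ne_of_gt hL)).tendsto.comp hinner
    exact hlog.const_mul _
  · have := Real.log_neg hL hLlt1
    nlinarith
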